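/- Let n ≥ 2 and let a, b ∈ [2, n−1] with gcd(a, n) = gcd(b, n) = 1. If ⌊n/a⌋ = ⌊n/b⌋ ≥ 2 and X(b) ⊆ X(a), then X(a) = X(b). -/

import Mathlib

/-- For `n ≥ 2` and `x ∈ [1, n-1]` with `gcd(x, n) = 1`,
`X n x = {⌈tn/x⌉ : t ∈ [1, x-1]}`. -/
def X (n x : ℕ) : Finset ℤ :=
  (Finset.Icc 1 (x - 1)).image fun t : ℕ => ⌈(t * n : ℚ) / x⌉

section aux

variable {n x q : ℕ}

lemma aux_mono (hx : 0 < x) {s s' : ℕ} (h : s ≤ s') :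
    ⌈(s * n : ℚ) / x⌉ ≤ ⌈(s' * n : ℚ) / x⌉ := by
  apply Int.ceil_le_ceil
  have hxQ : (0 : ℚ) < x := by exact_mod_cast hx
  have : (s : ℚ) ≤ s' := by exact_mod_cast h
  gcongr

lemma aux_spacing (hx : 0 < x) (hq : (q : ℚ) * x < n) {s s' : ℕ} (h : s < s') :
    ⌈(s * n : ℚ) / x⌉ + q ≤ ⌈(s' * n : ℚ) / x⌉ := by
  have hxQ : (0 : ℚ) < x := by exact_mod_cast hx
  have key : (⌈(s * n : ℚ) / x⌉ + q - 1 : ℤ) < ⌈(s' * n : ℚ) / x⌉ := by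
    rw [Int.lt_ceil]
    have h1 : ((⌈(s * n : ℚ) / x⌉ : ℚ)) < (s * n : ℚ) / x + 1 := Int.ceil_lt_add_one _
    have h2 : (q : ℚ) < (n : ℚ) / x := (lt_div_iff₀ hxQ).2 hq
    have h3 : ((s : ℚ) * n) / x + (n : ℚ) / x ≤ (s' * n : ℚ) / x := by
      rw [← add_div]
      have h4 : (s : ℚ) + 1 ≤ s' := by exact_mod_cast h
      have h5 : (0:ℚ) ≤ n := Nat.cast_nonneg n
      gcongr
      nlinarith
    push_cast
    linarith
  omega

lemma aux_gap (hx : 0 < x) (hq2 : (n : ℚ) < (q + 1) * x) (t : ℕ) :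
    ⌈((t + 1 : ℕ) * n : ℚ) / x⌉ ≤ ⌈(t * n : ℚ) / x⌉ + (q + 1) := by
  have hxQ : (0 : ℚ) < x := by exact_mod_cast hx
  have hceil : (⌈(n : ℚ) / x⌉ : ℤ) ≤ (q : ℤ) + 1 := by
    apply Int.ceil_le.2
    push_cast
    rw [div_le_iff₀ hxQ]
    linarith
  have : ((t + 1 : ℕ) * n : ℚ) / x = (t * n : ℚ) / x + (n : ℚ) / x := by
    push_cast; ring
  rw [this]
  calc ⌈(t * n : ℚ) / x + (n : ℚ) / x⌉ ≤ ⌈(t * n : ℚ) / x⌉ + ⌈(n : ℚ) / x⌉ :=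
        Int.ceil_add_le _ _
    _ ≤ ⌈(t * n : ℚ) / x⌉ + (q + 1) := by omega

lemma aux_first (hx : 0 < x) (hq : (q : ℚ) * x < n) (hq2 : (n : ℚ) < (q + 1) * x) :
    ⌈((1 : ℕ) * n : ℚ) / x⌉ = (q : ℤ) + 1 := by
  have hxQ : (0 : ℚ) < x := by exact_mod_cast hx
  rw [Int.ceil_eq_iff]
  constructor
  · push_cast
    rw [lt_div_iff₀ hxQ]
    linarith
  · push_cast
    rw [div_le_iff₀ hxQ]
    linarith

lemma aux_last (hx : 2 ≤ x) (hq : (q : ℚ) * x < n) (hq2 : (n : ℚ) < (q + 1) * x) :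
    ⌈((x - 1 : ℕ) * n : ℚ) / x⌉ = (n : ℤ) - q := by
  have hxQ : (0 : ℚ) < x := by positivity
  have hcast : ((x - 1 : ℕ) : ℚ) = (x : ℚ) - 1 := by
    have : 1 ≤ x := by omega
    push_cast [this]; ring
  rw [Int.ceil_eq_iff]
  constructor
  · rw [hcast]
    push_cast
    rw [lt_div_iff₀ hxQ]
    nlinarith
  · rw [hcast]
    push_cast
    rw [div_le_iff₀ hxQ]
    nlinarith

end aux

theorem stmt_16 (n a b : ℕ) (hn : 2 ≤ n)
    (ha1 : 2 ≤ a) (ha2 : a ≤ n - 1) (hb1 : 2 ≤ b) (hb2 : b ≤ n - 1)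
    (hga : Nat.gcd a n = 1) (hgb : Nat.gcd b n = 1)
    (hfloor : n / a = n / b) (hd2 : 2 ≤ n / a) (hsub : X n b ⊆ X n a) :
    X n a = X n b := by
  apply Finset.Subset.antisymm _ hsub
  intro w hw
  by_contra hwb
  obtain ⟨q, hqdef⟩ : ∃ q, q = n / a := ⟨_, rfl⟩
  have hd2 : 2 ≤ q := hqdef ▸ hd2
  have hapos : 0 < a := by omega
  have hbpos : 0 < b := by omega
  have hand : ¬ a ∣ n := by
    intro h
    have := Nat.le_of_dvd one_pos (hga ▸ Nat.dvd_gcd dvd_rfl h)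
    omega
  have hbnd : ¬ b ∣ n := by
    intro h
    have := Nat.le_of_dvd one_pos (hgb ▸ Nat.dvd_gcd dvd_rfl h)
    omega
  have hma : n % a ≠ 0 := fun h => hand (Nat.dvd_of_mod_eq_zero h)
  have hmb : n % b ≠ 0 := fun h => hbnd (Nat.dvd_of_mod_eq_zero h)
  have hda := Nat.div_add_mod n a
  have hdb := Nat.div_add_mod n b
  have hma' := Nat.mod_lt n hapos
  have hmb' := Nat.mod_lt n hbpos
  have hea : q * a = a * (n / a) := by rw [hqdef, mul_comm]
  have heb : q * b = b * (n / b) := by rw [hqdef, hfloor, mul_comm]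
  have hea' : (q + 1) * a = a * (n / a) + a := by rw [hqdef]; ring
  have heb' : (q + 1) * b = b * (n / b) + b := by rw [hqdef, hfloor]; ring
  have hqa1 : q * a < n := by omega
  have hqa2 : n < (q + 1) * a := by omega
  have hqb1 : q * b < n := by omega
  have hqb2 : n < (q + 1) * b := by omega
  have hQa1 : (q : ℚ) * a < n := by exact_mod_cast hqa1
  have hQa2 : (n : ℚ) < ((q : ℚ) + 1) * a := by exact_mod_cast hqa2
  have hQb1 : (q : ℚ) * b < n := by exact_mod_cast hqb1
  have hQb2 : (n : ℚ) < ((q : ℚ) + 1) * b := by exact_mod_cast hqb2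
  obtain ⟨s, hsmem, hsw⟩ := Finset.mem_image.1 hw
  rw [Finset.mem_Icc] at hsmem
  have hfa := aux_first (q := q) hapos hQa1 hQa2
  have hla := aux_last (q := q) ha1 hQa1 hQa2
  have hfb := aux_first (q := q) hbpos hQb1 hQb2
  have hlb := aux_last (q := q) hb1 hQb1 hQb2
  have hwlo : (q : ℤ) + 1 ≤ w := by
    rw [← hsw, ← hfa]
    exact aux_mono hapos hsmem.1
  have hwhi : w ≤ (n : ℤ) - q := by
    rw [← hsw, ← hla]
    exact aux_mono hapos hsmem.2
  have hfb_mem : ((q : ℤ) + 1) ∈ X n b := by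
    rw [← hfb]
    exact Finset.mem_image_of_mem _ (by rw [Finset.mem_Icc]; omega)
  have hlb_mem : ((n : ℤ) - q) ∈ X n b := by
    rw [← hlb]
    exact Finset.mem_image_of_mem _ (by rw [Finset.mem_Icc]; omega)
  have hwlo' : (q : ℤ) + 1 < w :=
    lt_of_le_of_ne hwlo (by intro h; exact hwb (h ▸ hfb_mem))
  have hwhi' : w < (n : ℤ) - q :=
    lt_of_le_of_ne hwhi (by intro h; exact hwb (h ▸ hlb_mem))
  classical
  set S := (Finset.Icc 1 (b - 1)).filter (fun t : ℕ => ⌈(t * n : ℚ) / b⌉ < w) with hS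
  have hS1 : 1 ∈ S := by
    rw [hS, Finset.mem_filter, Finset.mem_Icc]
    exact ⟨⟨le_refl 1, by omega⟩, by rw [hfb]; exact hwlo'⟩
  have hSne : S.Nonempty := ⟨1, hS1⟩
  set t := S.max' hSne with htdef
  have htS : t ∈ S := S.max'_mem hSne
  rw [hS, Finset.mem_filter, Finset.mem_Icc] at htS
  obtain ⟨⟨ht1, ht2⟩, htw⟩ := htS
  have ht_lt : t < b - 1 := by
    rcases lt_or_eq_of_le ht2 with h | h
    · exact h
    · rw [h, hlb] at htw; omega
  have ht1mem : t + 1 ∈ Finset.Icc 1 (b - 1) := by rw [Finset.mem_Icc]; omega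
  have ht1ge : w ≤ ⌈((t + 1 : ℕ) * n : ℚ) / b⌉ := by
    by_contra hlt
    push_neg at hlt
    have hmem : t + 1 ∈ S := by
      rw [hS, Finset.mem_filter]
      exact ⟨ht1mem, hlt⟩
    have := S.le_max' _ hmem
    omega
  have ht1mem' : ⌈((t + 1 : ℕ) * n : ℚ) / b⌉ ∈ X n b :=
    Finset.mem_image_of_mem _ ht1mem
  have ht1gt : w < ⌈((t + 1 : ℕ) * n : ℚ) / b⌉ :=
    lt_of_le_of_ne ht1ge (by intro h; exact hwb (h ▸ ht1mem'))
  have htmem' : ⌈((t : ℕ) * n : ℚ) / b⌉ ∈ X n b :=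
    Finset.mem_image_of_mem _ (by rw [Finset.mem_Icc]; omega)
  obtain ⟨s₁, hs₁mem, hs₁⟩ := Finset.mem_image.1 (hsub htmem')
  obtain ⟨s₂, hs₂mem, hs₂⟩ := Finset.mem_image.1 (hsub ht1mem')
  rw [Finset.mem_Icc] at hs₁mem hs₂mem
  have hs₁s : s₁ < s := by
    by_contra h
    push_neg at h
    have := aux_mono (n := n) hapos h
    rw [hsw, hs₁] at this
    omega
  have hss₂ : s < s₂ := by
    by_contra h
    push_neg at h
    have := aux_mono (n := n) hapos h
    rw [hsw, hs₂] at this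
    omega
  have sp1 := aux_spacing hapos hQa1 hs₁s
  rw [hsw, hs₁] at sp1
  have sp2 := aux_spacing hapos hQa1 hss₂
  rw [hsw, hs₂] at sp2
  have gap := aux_gap hbpos hQb2 t
  omega
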